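/- (Case: all conditional states different.) Let n ≥ 1, O a finite nonempty outcome set, and ρ̃ : Fin 2 → O → Matrix n n ℂ a family such that ∑_{a∈O} ρ̃ ℓ a = ρ_B (a fixed density matrix) for ℓ = 0, 1, every ρ̃ ℓ a is a nonzero unnormalized pure state, and all the conditional states are pairwise non-proportional: for (ℓ,a) ≠ (ℓ',a'), ρ̃ ℓ a is not a positive real multiple of ρ̃ ℓ' a'. Then ρ̃ admits no LHS model (the steering paradox '2_Q = 1_C', i.e. δ = 0). -/

import Mathlib

open Matrix BigOperators
open scoped ComplexOrder

noncomputable section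

/-- A density matrix: positive semidefinite with trace 1. -/
def IsDensityMatrix {n : ℕ} (A : Matrix (Fin n) (Fin n) ℂ) : Prop :=
  A.PosSemidef ∧ A.trace = 1

/-- An unnormalized pure state: a nonnegative real multiple of a rank-one
projection `v vᴴ` onto a unit vector `v`. -/
def IsUnnormalizedPure {n : ℕ} (A : Matrix (Fin n) (Fin n) ℂ) : Prop :=
  ∃ (c : ℝ) (v : Fin n → ℂ), 0 ≤ c ∧ star v ⬝ᵥ v = 1 ∧ A = c • vecMulVec v (star v)

/-- `A` is a positive real multiple of `B`. -/
def IsPosMultiple {n : ℕ} (A B : Matrix (Fin n) (Fin n) ℂ) : Prop :=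
  ∃ c : ℝ, 0 < c ∧ A = c • B

/-- A local-hidden-state (LHS) model for a family of unnormalized conditional
states `ρt ℓ a` (setting `ℓ`, outcome `a`). -/
def HasLHSModel {n k : ℕ} {O : Type*} [Fintype O]
    (ρt : Fin k → O → Matrix (Fin n) (Fin n) ℂ) : Prop :=
  ∃ (m : ℕ) (w : Fin m → ℝ) (ρ : Fin m → Matrix (Fin n) (Fin n) ℂ)
    (p : O → Fin k → Fin m → ℝ),
    (∀ ξ, 0 ≤ w ξ) ∧ ((∑ ξ, w ξ) = 1) ∧
    (∀ ξ, IsDensityMatrix (ρ ξ)) ∧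
    (∀ a ℓ ξ, 0 ≤ p a ℓ ξ) ∧
    (∀ ℓ ξ, (∑ a, p a ℓ ξ) = 1) ∧
    (∀ ℓ a, ρt ℓ a = ∑ ξ, p a ℓ ξ • w ξ • ρ ξ)

lemma vvT_mulVec {n : ℕ} (v w : Fin n → ℂ) :
    (vecMulVec v (star v)) *ᵥ w = (star v ⬝ᵥ w) • v := by
  ext i
  simp only [mulVec, dotProduct, vecMulVec_apply, Pi.smul_apply, smul_eq_mul, Finset.sum_mul,
    Pi.star_apply]
  exact Finset.sum_congr rfl fun j _ => by ring

lemma real_smul_matrix {n : ℕ} (r : ℝ) (A : Matrix (Fin n) (Fin n) ℂ) :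
    r • A = (r : ℂ) • A := by
  ext i j; simp [Complex.real_smul]

lemma posSemidef_real_smul {n : ℕ} {M : Matrix (Fin n) (Fin n) ℂ} (hM : M.PosSemidef)
    {r : ℝ} (hr : 0 ≤ r) : (r • M).PosSemidef := by
  rw [real_smul_matrix]
  refine PosSemidef.of_dotProduct_mulVec_nonneg ?_ fun x => ?_
  · unfold Matrix.IsHermitian
    rw [conjTranspose_smul, hM.1]
    congr 1
    simp [Complex.ext_iff]
  · rw [smul_mulVec, dotProduct_smul, smul_eq_mul]
    have := hM.dotProduct_mulVec_nonneg x
    rw [Complex.nonneg_iff] at this ⊢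
    constructor
    · simp only [Complex.mul_re, Complex.ofReal_re, Complex.ofReal_im, ← this.2, zero_mul,
        mul_zero, sub_zero]
      exact mul_nonneg hr this.1
    · simp [Complex.mul_im, ← this.2]

lemma trace_vvT {n : ℕ} {v : Fin n → ℂ} (hv : star v ⬝ᵥ v = 1) :
    (vecMulVec v (star v)).trace = 1 := by
  rw [← hv]
  simp only [Matrix.trace, Matrix.diag, vecMulVec_apply, dotProduct, Pi.star_apply]
  exact Finset.sum_congr rfl fun j _ => by ring

lemma pure_decomp {n : ℕ} {M N : Matrix (Fin n) (Fin n) ℂ} {v : Fin n → ℂ} {C : ℂ}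
    (hM : M.PosSemidef) (hN : N.PosSemidef) (hv : star v ⬝ᵥ v = 1)
    (hMN : M + N = C • vecMulVec v (star v)) :
    M = (star v ⬝ᵥ M *ᵥ v) • vecMulVec v (star v) := by
  have hz : ∀ z : Fin n → ℂ, star v ⬝ᵥ z = 0 → M *ᵥ z = 0 := by
    intro z hzv
    have h0 : star z ⬝ᵥ (M + N) *ᵥ z = 0 := by
      rw [hMN, smul_mulVec, vvT_mulVec, hzv, zero_smul, smul_zero, dotProduct_zero]
    rw [add_mulVec, dotProduct_add] at h0
    have h1 := hM.dotProduct_mulVec_nonneg z; have h2 := hN.dotProduct_mulVec_nonneg z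
    have hMz0 : star z ⬝ᵥ M *ᵥ z = 0 := by
      have := (add_eq_zero_iff_of_nonneg h1 h2).mp h0
      exact this.1
    exact (hM.dotProduct_mulVec_zero_iff z).mp hMz0
  set α := star v ⬝ᵥ M *ᵥ v with hα
  have hvz : star v ⬝ᵥ (M *ᵥ v - α • v) = 0 := by
    rw [dotProduct_sub, dotProduct_smul, hv, smul_eq_mul, mul_one, sub_self]
  have hMz : M *ᵥ (M *ᵥ v - α • v) = 0 := hz _ hvz
  have hMherm : star (M *ᵥ v - α • v) ᵥ* M = 0 := by
    nth_rewrite 2 [← hM.1]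
    rw [← star_mulVec, hMz, star_zero]
  have hMv : M *ᵥ v = α • v := by
    rw [← sub_eq_zero, ← dotProduct_star_self_eq_zero]
    set z := M *ᵥ v - α • v
    have hzv' : star z ⬝ᵥ v = 0 := by
      rw [star_dotProduct, hvz, star_zero]
    calc star z ⬝ᵥ z = star z ⬝ᵥ (M *ᵥ v) - α * (star z ⬝ᵥ v) := by
          simp [z, dotProduct_sub, dotProduct_smul]
      _ = 0 := by
          rw [dotProduct_mulVec, hMherm, zero_dotProduct, hzv', mul_zero, sub_zero]
  have key : ∀ u, M *ᵥ u = α • (star v ⬝ᵥ u) • v := by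
    intro u
    have hperp : star v ⬝ᵥ (u - (star v ⬝ᵥ u) • v) = 0 := by
      rw [dotProduct_sub, dotProduct_smul, hv, smul_eq_mul, mul_one, sub_self]
    have hdecomp : u = (star v ⬝ᵥ u) • v + (u - (star v ⬝ᵥ u) • v) := by
      rw [add_sub_cancel]
    conv_lhs => rw [hdecomp]
    rw [mulVec_add, mulVec_smul, hMv, hz _ hperp, add_zero, smul_comm]
  ext i j
  have h := congrFun (key (Pi.single j 1)) i
  simp only [mulVec_single, MulOpposite.op_one, one_smul, col_apply, mul_one, Pi.smul_apply, smul_eq_mul, dotProduct_single] at h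
  rw [Matrix.smul_apply, vecMulVec_apply, h, smul_eq_mul]
  ring

set_option maxHeartbeats 1000000 in
/-- all conditional states different: if every conditional state
is a nonzero unnormalized pure state, the states of each setting sum to a
fixed density matrix `ρB`, and all conditional states are pairwise
non-proportional, then no LHS model exists (the paradox "2_Q = 1_C"). -/
theorem no_lhs_of_all_different {n : ℕ} (hn : 1 ≤ n)
    {O : Type*} [Fintype O] [Nonempty O]
    (ρB : Matrix (Fin n) (Fin n) ℂ) (hρB : IsDensityMatrix ρB)
    (ρt : Fin 2 → O → Matrix (Fin n) (Fin n) ℂ)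
    (hsum : ∀ ℓ, (∑ a, ρt ℓ a) = ρB)
    (hpure : ∀ ℓ a, IsUnnormalizedPure (ρt ℓ a))
    (hne : ∀ ℓ a, ρt ℓ a ≠ 0)
    (hdist : ∀ ℓ a ℓ' a', (ℓ, a) ≠ (ℓ', a') →
      ¬ IsPosMultiple (ρt ℓ a) (ρt ℓ' a')) :
    ¬ HasLHSModel ρt := by
  rintro ⟨m, w, ρ, p, hw, hwsum, hρ, hp, hpsum, hmodel⟩
  obtain ⟨ξ0, hξ0⟩ : ∃ ξ, 0 < w ξ := by
    by_contra h; push_neg at h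
    have : (∑ ξ, w ξ) ≤ 0 := Finset.sum_nonpos fun ξ _ => h ξ
    rw [hwsum] at this; linarith
  have pick : ∀ ℓ : Fin 2, ∃ a : O, 0 < p a ℓ ξ0 := by
    intro ℓ
    by_contra h; push_neg at h
    have h0 : ∀ a, p a ℓ ξ0 = 0 := fun a => le_antisymm (h a) (hp a ℓ ξ0)
    have := hpsum ℓ ξ0
    simp [h0] at this
  have claim : ∀ (ℓ : Fin 2) (a : O), 0 < p a ℓ ξ0 →
      ∃ c : ℝ, 0 < c ∧ ρt ℓ a = c • ρ ξ0 := by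
    intro ℓ a hpa
    obtain ⟨c, v, hc, hv, hρt⟩ := hpure ℓ a
    set t := p a ℓ ξ0 * w ξ0 with ht
    have htpos : 0 < t := mul_pos hpa hξ0
    have hsum' : (∑ ξ, p a ℓ ξ • w ξ • ρ ξ) =
        (p a ℓ ξ0 • w ξ0 • ρ ξ0) + ∑ ξ ∈ Finset.univ.erase ξ0, p a ℓ ξ • w ξ • ρ ξ :=
      (Finset.add_sum_erase _ (fun ξ => p a ℓ ξ • w ξ • ρ ξ) (Finset.mem_univ ξ0)).symm
    have hsplit : (p a ℓ ξ0 • w ξ0 • ρ ξ0) + ∑ ξ ∈ Finset.univ.erase ξ0, p a ℓ ξ • w ξ • ρ ξ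
        = (c : ℂ) • vecMulVec v (star v) := by
      rw [← hsum', ← hmodel ℓ a, hρt, real_smul_matrix]
    have hMpsd : (p a ℓ ξ0 • w ξ0 • ρ ξ0).PosSemidef :=
      posSemidef_real_smul (posSemidef_real_smul (hρ ξ0).1 (hw ξ0)) (hp a ℓ ξ0)
    have hNpsd : (∑ ξ ∈ Finset.univ.erase ξ0, p a ℓ ξ • w ξ • ρ ξ).PosSemidef := by
      apply Finset.sum_induction _ Matrix.PosSemidef (fun A B hA hB => hA.add hB)
        Matrix.PosSemidef.zero
      intro ξ _
      exact posSemidef_real_smul (posSemidef_real_smul (hρ ξ).1 (hw ξ)) (hp a ℓ ξ)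
    have hdec := pure_decomp hMpsd hNpsd hv hsplit
    set α := star v ⬝ᵥ (p a ℓ ξ0 • w ξ0 • ρ ξ0) *ᵥ v with hαdef
    have hlhs : p a ℓ ξ0 • w ξ0 • ρ ξ0 = (t : ℂ) • ρ ξ0 := by
      rw [smul_smul, real_smul_matrix]
    have heq : (t : ℂ) • ρ ξ0 = α • vecMulVec v (star v) := by rw [← hlhs, hdec]
    have htr : (t : ℂ) = α := by
      have h2 := congrArg Matrix.trace heq
      rwa [trace_smul, trace_smul, (hρ ξ0).2, trace_vvT hv, smul_eq_mul, smul_eq_mul,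
        mul_one, mul_one] at h2
    have htne : (t : ℂ) ≠ 0 := by exact_mod_cast ne_of_gt htpos
    have hρξ0 : ρ ξ0 = vecMulVec v (star v) := by
      calc ρ ξ0 = (t:ℂ)⁻¹ • ((t:ℂ) • ρ ξ0) := by
            rw [smul_smul, inv_mul_cancel₀ htne, one_smul]
        _ = vecMulVec v (star v) := by
            rw [heq, ← htr, smul_smul, inv_mul_cancel₀ htne, one_smul]
    have hcpos : 0 < c := by
      rcases hc.lt_or_eq with h | h
      · exact h
      · exfalso; apply hne ℓ a; rw [hρt, ← h, zero_smul]
    exact ⟨c, hcpos, by rw [hρt, hρξ0]⟩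
  obtain ⟨a0, ha0⟩ := pick 0
  obtain ⟨a1, ha1⟩ := pick 1
  obtain ⟨c0, hc0, h0⟩ := claim 0 a0 ha0
  obtain ⟨c1, hc1, h1⟩ := claim 1 a1 ha1
  refine hdist 0 a0 1 a1 (by intro h; simp at h) ⟨c0 / c1, div_pos hc0 hc1, ?_⟩
  rw [h0, h1, smul_smul, div_mul_cancel₀ _ (ne_of_gt hc1)]
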